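/- arXiv:1602.05548 — 3 statements merged into one kernel-verified Lean document; each statement's English description precedes it below -/
import Mathlib

section
/- Let (Ω, μ) be a probability space, K and N finite index sets, and for each t ∈ ℕ let Q_k(t) (k ∈ K) and H_n(t) (n ∈ N) be nonnegative random variables whose squares are integrable, and let η(t) be an integrable random variable. Define L(t) = (1/2)(∑_{k∈K} Q_k(t)² + ∑_{n∈N} H_n(t)²). Let V > 0, B ≥ 0, C ≥ 0, ε > 0 and η_opt, η_max be real constants with E[η(t)] ≤ η_max for all t. Suppose the drift-plus-penalty inequality E[L(t+1)] − E[L(t)] − V·E[η(t)] ≤ B + C − V·η_opt − ε·∑_{k∈K} E[Q_k(t)] holds for every t ∈ ℕ. Then every actual queue and every virtual queue is mean-rate stable: for each k ∈ K, lim_{T→∞} E[Q_k(T)]/T = 0, and for each n ∈ N, lim_{T→∞} E[H_n(T)]/T = 0. (Paper's Theorem 1.) -/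
open MeasureTheory Filter Finset

lemma aux_sqrt_linear_div_tendsto (a b : ℝ) (ha : 0 ≤ a) (hb : 0 ≤ b) :
    Tendsto (fun T : ℕ => Real.sqrt (a + b * T) / T) atTop (nhds 0) := by
  have h2 : Tendsto (fun T : ℕ => ((T : ℝ)) ^ 2) atTop atTop :=
    (tendsto_pow_atTop two_ne_zero).comp tendsto_natCast_atTop_atTop
  have h1 : Tendsto (fun T : ℕ => a / (T : ℝ) ^ 2 + b / T) atTop (nhds 0) := by
    have ha2 : Tendsto (fun T : ℕ => a / (T : ℝ) ^ 2) atTop (nhds 0) :=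
      tendsto_const_nhds.div_atTop h2
    have hb2 : Tendsto (fun T : ℕ => b / (T : ℝ)) atTop (nhds 0) :=
      tendsto_const_nhds.div_atTop tendsto_natCast_atTop_atTop
    simpa using ha2.add hb2
  have hs : Tendsto (fun T : ℕ => Real.sqrt (a / (T : ℝ) ^ 2 + b / T)) atTop (nhds 0) := by
    have := (Real.continuous_sqrt.tendsto 0).comp h1
    simpa [Function.comp_def] using this
  refine hs.congr' ?_
  filter_upwards [eventually_ge_atTop 1] with T hT
  have hT0 : (0 : ℝ) < T := by exact_mod_cast hT
  rw [show a / (T:ℝ)^2 + b / T = (a + b*T) / (T:ℝ)^2 by field_simp,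
    Real.sqrt_div (by positivity), Real.sqrt_sq hT0.le]

lemma aux_tendsto_div_of_sq_le (g : ℕ → ℝ) (a b : ℝ) (ha : 0 ≤ a) (hb : 0 ≤ b)
    (hg0 : ∀ T, 0 ≤ g T) (hg : ∀ T, (g T) ^ 2 ≤ a + b * T) :
    Tendsto (fun T : ℕ => g T / T) atTop (nhds 0) := by
  have hsq := aux_sqrt_linear_div_tendsto a b ha hb
  refine tendsto_of_tendsto_of_tendsto_of_le_of_le' tendsto_const_nhds hsq ?_ ?_
  · filter_upwards with T
    exact div_nonneg (hg0 T) (Nat.cast_nonneg T)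
  · filter_upwards [eventually_ge_atTop 1] with T hT
    have hT0 : (0 : ℝ) < T := by exact_mod_cast hT
    have hle : g T ≤ Real.sqrt (a + b * T) := by
      rw [show g T = Real.sqrt ((g T) ^ 2) from (Real.sqrt_sq (hg0 T)).symm]
      exact Real.sqrt_le_sqrt (hg T)
    exact div_le_div_of_nonneg_right hle hT0.le

/-- Paper's Theorem 1: under the drift-plus-penalty inequality with `ε > 0`,
all actual queues and all virtual queues are mean-rate stable. -/
theorem drift_plus_penalty_implies_mean_rate_stable
    {Ω : Type*} [MeasurableSpace Ω] (μ : Measure Ω) [IsProbabilityMeasure μ]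
    {K N : Type*} [Fintype K] [Fintype N]
    (Q : ℕ → K → Ω → ℝ) (H : ℕ → N → Ω → ℝ) (η : ℕ → Ω → ℝ)
    (hQnonneg : ∀ t k ω, 0 ≤ Q t k ω) (hHnonneg : ∀ t n ω, 0 ≤ H t n ω)
    (hQsq : ∀ t k, Integrable (fun ω => (Q t k ω) ^ 2) μ)
    (hHsq : ∀ t n, Integrable (fun ω => (H t n ω) ^ 2) μ)
    (hηint : ∀ t, Integrable (η t) μ)
    (L : ℕ → Ω → ℝ)
    (hL : ∀ t ω, L t ω = (1 / 2) * (∑ k, (Q t k ω) ^ 2 + ∑ n, (H t n ω) ^ 2))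
    (V B C ε ηopt ηmax : ℝ) (hV : 0 < V) (hB : 0 ≤ B) (hC : 0 ≤ C) (hε : 0 < ε)
    (hηmax : ∀ t, (∫ ω, η t ω ∂μ) ≤ ηmax)
    (hdrift : ∀ t, (∫ ω, L (t + 1) ω ∂μ) - (∫ ω, L t ω ∂μ) - V * (∫ ω, η t ω ∂μ)
        ≤ B + C - V * ηopt - ε * ∑ k, ∫ ω, Q t k ω ∂μ) :
    (∀ k, Tendsto (fun T : ℕ => (∫ ω, Q T k ω ∂μ) / (T : ℝ)) atTop (nhds 0)) ∧
    (∀ n, Tendsto (fun T : ℕ => (∫ ω, H T n ω ∂μ) / (T : ℝ)) atTop (nhds 0)) := by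
  set c : ℝ := B + C - V * ηopt + V * ηmax with hc
  set c' : ℝ := max c 0 with hc'
  have hc'0 : 0 ≤ c' := le_max_right _ _
  -- value of ∫ L t
  have hLval : ∀ t, ∫ ω, L t ω ∂μ
      = (1/2) * (∑ k, ∫ ω, (Q t k ω) ^ 2 ∂μ + ∑ n, ∫ ω, (H t n ω) ^ 2 ∂μ) := by
    intro t
    calc ∫ ω, L t ω ∂μ
        = ∫ ω, (1/2 : ℝ) * (∑ k, (Q t k ω) ^ 2 + ∑ n, (H t n ω) ^ 2) ∂μ :=
          integral_congr_ae (ae_of_all _ fun ω => hL t ω)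
      _ = _ := by
          rw [integral_const_mul,
            integral_add (integrable_finset_sum _ fun k _ => hQsq t k)
              (integrable_finset_sum _ fun n _ => hHsq t n),
            integral_finset_sum _ (fun k _ => hQsq t k),
            integral_finset_sum _ (fun n _ => hHsq t n)]
  -- measurability and Memℒp
  have hQm : ∀ t k, AEStronglyMeasurable (Q t k) μ := by
    intro t k
    have h := (hQsq t k).aestronglyMeasurable
    have h' : AEStronglyMeasurable (fun ω => Real.sqrt ((Q t k ω) ^ 2)) μ :=
      Real.continuous_sqrt.comp_aestronglyMeasurable h
    exact h'.congr (ae_of_all _ fun ω => Real.sqrt_sq (hQnonneg t k ω))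
  have hHm : ∀ t n, AEStronglyMeasurable (H t n) μ := by
    intro t n
    have h := (hHsq t n).aestronglyMeasurable
    have h' : AEStronglyMeasurable (fun ω => Real.sqrt ((H t n ω) ^ 2)) μ :=
      Real.continuous_sqrt.comp_aestronglyMeasurable h
    exact h'.congr (ae_of_all _ fun ω => Real.sqrt_sq (hHnonneg t n ω))
  have hQL2 : ∀ t k, MemLp (Q t k) 2 μ := fun t k =>
    (memLp_two_iff_integrable_sq (hQm t k)).mpr (hQsq t k)
  have hHL2 : ∀ t n, MemLp (H t n) 2 μ := fun t n =>
    (memLp_two_iff_integrable_sq (hHm t n)).mpr (hHsq t n)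
  -- Cauchy-Schwarz via variance
  have hsqQ : ∀ t k, (∫ ω, Q t k ω ∂μ) ^ 2 ≤ ∫ ω, (Q t k ω) ^ 2 ∂μ := by
    intro t k
    have hv := ProbabilityTheory.variance_nonneg (Q t k) μ
    rw [ProbabilityTheory.variance_eq_sub (hQL2 t k)] at hv
    simpa using le_of_sub_nonneg hv
  have hsqH : ∀ t n, (∫ ω, H t n ω ∂μ) ^ 2 ≤ ∫ ω, (H t n ω) ^ 2 ∂μ := by
    intro t n
    have hv := ProbabilityTheory.variance_nonneg (H t n) μ
    rw [ProbabilityTheory.variance_eq_sub (hHL2 t n)] at hv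
    simpa using le_of_sub_nonneg hv
  -- drift step
  have key : ∀ t, ∫ ω, L (t+1) ω ∂μ ≤ ∫ ω, L t ω ∂μ + c' := by
    intro t
    have h1 := hdrift t
    have h2 : 0 ≤ ∑ k, ∫ ω, Q t k ω ∂μ :=
      Finset.sum_nonneg fun k _ => integral_nonneg (fun ω => hQnonneg t k ω)
    have h3 : V * (∫ ω, η t ω ∂μ) ≤ V * ηmax :=
      mul_le_mul_of_nonneg_left (hηmax t) hV.le
    have hcc' : c ≤ c' := le_max_left _ _
    nlinarith [mul_nonneg hε.le h2]
  -- linear growth of ∫ L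
  have hbound : ∀ T : ℕ, ∫ ω, L T ω ∂μ ≤ ∫ ω, L 0 ω ∂μ + T * c' := by
    intro T
    induction T with
    | zero => simp
    | succ T ih =>
      have h := key T
      push_cast
      nlinarith
  have hA : 0 ≤ ∫ ω, L 0 ω ∂μ := by
    apply integral_nonneg
    intro ω
    rw [hL 0 ω]
    positivity
  -- per-queue square bound
  have hQbound : ∀ k T, (∫ ω, Q T k ω ∂μ) ^ 2
      ≤ 2 * (∫ ω, L 0 ω ∂μ) + 2 * c' * T := by
    intro k T
    have h1 : ∫ ω, (Q T k ω) ^ 2 ∂μ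
        ≤ ∑ k, ∫ ω, (Q T k ω) ^ 2 ∂μ + ∑ n, ∫ ω, (H T n ω) ^ 2 ∂μ := by
      have h2 : ∫ ω, (Q T k ω) ^ 2 ∂μ ≤ ∑ k, ∫ ω, (Q T k ω) ^ 2 ∂μ :=
        Finset.single_le_sum (f := fun k => ∫ ω, (Q T k ω) ^ 2 ∂μ)
          (fun k _ => integral_nonneg fun ω => sq_nonneg _) (Finset.mem_univ k)
      have h3 : 0 ≤ ∑ n, ∫ ω, (H T n ω) ^ 2 ∂μ :=
        Finset.sum_nonneg fun n _ => integral_nonneg fun ω => sq_nonneg _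
      linarith
    have h4 := hbound T
    rw [hLval T] at h4
    have := (hsqQ T k).trans h1
    nlinarith
  have hHbound : ∀ n T, (∫ ω, H T n ω ∂μ) ^ 2
      ≤ 2 * (∫ ω, L 0 ω ∂μ) + 2 * c' * T := by
    intro n T
    have h1 : ∫ ω, (H T n ω) ^ 2 ∂μ
        ≤ ∑ k, ∫ ω, (Q T k ω) ^ 2 ∂μ + ∑ n, ∫ ω, (H T n ω) ^ 2 ∂μ := by
      have h2 : ∫ ω, (H T n ω) ^ 2 ∂μ ≤ ∑ n, ∫ ω, (H T n ω) ^ 2 ∂μ :=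
        Finset.single_le_sum (f := fun n => ∫ ω, (H T n ω) ^ 2 ∂μ)
          (fun n _ => integral_nonneg fun ω => sq_nonneg _) (Finset.mem_univ n)
      have h3 : 0 ≤ ∑ k, ∫ ω, (Q T k ω) ^ 2 ∂μ :=
        Finset.sum_nonneg fun k _ => integral_nonneg fun ω => sq_nonneg _
      linarith
    have h4 := hbound T
    rw [hLval T] at h4
    have := (hsqH T n).trans h1
    nlinarith
  constructor
  · intro k
    exact aux_tendsto_div_of_sq_le (fun T => ∫ ω, Q T k ω ∂μ)
      (2 * ∫ ω, L 0 ω ∂μ) (2 * c') (by linarith) (by linarith)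
      (fun T => integral_nonneg fun ω => hQnonneg T k ω) (hQbound k)
  · intro n
    exact aux_tendsto_div_of_sq_le (fun T => ∫ ω, H T n ω ∂μ)
      (2 * ∫ ω, L 0 ω ∂μ) (2 * c') (by linarith) (by linarith)
      (fun T => integral_nonneg fun ω => hHnonneg T n ω) (hHbound n)
end

section
/- Let φ > 0 be a real number, z_1, …, z_K ∈ ℂ, fix k ∈ {1, …, K}, and set S = ∑_{j=1}^{K} |z_j|² + φ, z = z_k, and SINR = |z|² / (∑_{j≠k} |z_j|² + φ). Then the joint infimum over the MSE weight and the receive filter satisfies inf_{w > 0, u ∈ ℂ} [ w·(|u|²·S − 2·Re(u·z) + 1) − log w ] = 1 + log(1 − |z|²/S) = 1 − log(1 + SINR), and this infimum is attained at u* = conj(z)/S and w* = (1 − |z|²/S)^{-1}. (Inner minimization establishing the WSR–WMMSE equivalence of the paper's Proposition 1.) -/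
open Finset

/-- Inner minimization establishing the WSR–WMMSE equivalence of the paper's
Proposition 1: the joint infimum over the MSE weight `w > 0` and receive
filter `u ∈ ℂ` of `w e(u) - log w` equals `1 + log (1 - |z_k|²/S)
= 1 - log (1 + SINR)`, attained at `u* = conj z_k / S` and
`w* = (1 - |z_k|²/S)⁻¹`. -/
theorem wmmse_inner_minimization (K : ℕ) (φ : ℝ) (hφ : 0 < φ) (z : Fin K → ℂ) (k : Fin K)
    (S SINR : ℝ)
    (hS : S = ∑ j, ‖z j‖ ^ 2 + φ)
    (hSINR : SINR = ‖z k‖ ^ 2 / (∑ j ∈ Finset.univ.erase k, ‖z j‖ ^ 2 + φ))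
    (e : ℂ → ℝ) (he : ∀ u : ℂ, e u = ‖u‖ ^ 2 * S - 2 * (u * z k).re + 1) :
    IsGLB {x : ℝ | ∃ w : ℝ, ∃ u : ℂ, 0 < w ∧ x = w * e u - Real.log w}
        (1 + Real.log (1 - ‖z k‖ ^ 2 / S)) ∧
    1 + Real.log (1 - ‖z k‖ ^ 2 / S) = 1 - Real.log (1 + SINR) ∧
    (1 - ‖z k‖ ^ 2 / S)⁻¹ * e ((starRingEnd ℂ) (z k) / (S : ℂ))
        - Real.log ((1 - ‖z k‖ ^ 2 / S)⁻¹)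
      = 1 + Real.log (1 - ‖z k‖ ^ 2 / S) := by
  set I : ℝ := ∑ j ∈ Finset.univ.erase k, ‖z j‖ ^ 2 + φ with hI
  have hIpos : 0 < I := by
    have : (0:ℝ) ≤ ∑ j ∈ Finset.univ.erase k, ‖z j‖ ^ 2 :=
      Finset.sum_nonneg fun j _ => by positivity
    linarith
  have hsplit : S = ‖z k‖ ^ 2 + I := by
    rw [hS, hI, ← Finset.add_sum_erase _ _ (Finset.mem_univ k), add_assoc]
  have hSpos : 0 < S := by nlinarith [sq_nonneg ‖z k‖]
  set m : ℝ := 1 - ‖z k‖ ^ 2 / S with hm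
  have hmI : m = I / S := by
    rw [hm, hsplit]; field_simp; ring
  have hmpos : 0 < m := by rw [hmI]; positivity
  -- value of e at the optimal filter
  have heopt : e ((starRingEnd ℂ) (z k) / (S : ℂ)) = m := by
    rw [he]
    have h1 : ‖(starRingEnd ℂ) (z k) / (S : ℂ)‖ = ‖z k‖ / S := by
      rw [norm_div, RingHomIsometric.norm_map]
      simp [Complex.norm_real, abs_of_pos hSpos]
    have h2 : ((starRingEnd ℂ) (z k) / (S : ℂ) * z k).re = ‖z k‖ ^ 2 / S := by
      rw [div_mul_eq_mul_div, mul_comm, Complex.mul_conj]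
      rw [Complex.normSq_eq_norm_sq]
      have : ((‖z k‖ ^ 2 : ℝ) : ℂ) / ((S : ℝ) : ℂ)
          = (((‖z k‖ ^ 2 / S : ℝ)) : ℂ) := by
        rw [Complex.ofReal_div]
      rw [this, Complex.ofReal_re]
    rw [h1, h2, div_pow, hm]
    field_simp
    ring
  -- e u ≥ m for all u
  have heLB : ∀ u : ℂ, m ≤ e u := by
    intro u
    rw [he]
    have h1 : (u * z k).re ≤ ‖u‖ * ‖z k‖ := by
      calc (u * z k).re ≤ ‖u * z k‖ := Complex.re_le_norm _
        _ = ‖u‖ * ‖z k‖ := by rw [norm_mul]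
    have h2 : 0 ≤ (S * ‖u‖ - ‖z k‖) ^ 2 := sq_nonneg _
    rw [hm]
    have h3 : ‖z k‖ ^ 2 / S * S = ‖z k‖ ^ 2 := div_mul_cancel₀ _ (ne_of_gt hSpos)
    nlinarith [h2, h1, hSpos, h3, mul_pos hSpos hSpos]
  -- the optimal value is attained
  have hmem : (1 + Real.log m) ∈
      {x : ℝ | ∃ w : ℝ, ∃ u : ℂ, 0 < w ∧ x = w * e u - Real.log w} := by
    refine ⟨m⁻¹, (starRingEnd ℂ) (z k) / (S : ℂ), inv_pos.mpr hmpos, ?_⟩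
    rw [heopt, Real.log_inv, inv_mul_cancel₀ (ne_of_gt hmpos)]
    ring
  have hlb : ∀ x ∈ {x : ℝ | ∃ w : ℝ, ∃ u : ℂ, 0 < w ∧ x = w * e u - Real.log w},
      1 + Real.log m ≤ x := by
    rintro x ⟨w, u, hw, rfl⟩
    have h1 : Real.log (w * m) ≤ w * m - 1 :=
      Real.log_le_sub_one_of_pos (mul_pos hw hmpos)
    rw [Real.log_mul (ne_of_gt hw) (ne_of_gt hmpos)] at h1
    have h2 : w * m ≤ w * e u := by
      exact mul_le_mul_of_nonneg_left (heLB u) (le_of_lt hw)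
    linarith
  refine ⟨IsLeast.isGLB ⟨hmem, hlb⟩, ?_, ?_⟩
  · have h1 : (1 : ℝ) + SINR = S / I := by
      rw [hSINR, hsplit]; field_simp; ring
    rw [h1, hmI, Real.log_div (ne_of_gt hIpos) (ne_of_gt hSpos),
      Real.log_div (ne_of_gt hSpos) (ne_of_gt hIpos)]
    ring
  · rw [heopt, Real.log_inv, inv_mul_cancel₀ (ne_of_gt hmpos)]
    ring
end

section
/- Let m, K ∈ ℕ, and for each k ∈ {1,…,K} let h_k ∈ ℂ^m be a channel vector, φ_k > 0 a real interference-plus-noise constant, and Y_k > 0 a real weight. Let P : (ℂ^m)^K → ℝ be any real-valued (weighted power) function of the beamformer tuple v = (v_1, …, v_K), and let F ⊆ (ℂ^m)^K be any (feasible) set. For v ∈ (ℂ^m)^K define z_{k,j}(v) = h_k^H v_j, S_k(v) = ∑_{j=1}^{K} |z_{k,j}(v)|² + φ_k, SINR_k(v) = |z_{k,k}(v)|² / (∑_{j≠k} |z_{k,j}(v)|² + φ_k), R_k(v) = log(1 + SINR_k(v)), and for w ∈ (0,∞)^K, u ∈ ℂ^K define the WMMSE objective W(v, w, u) = ∑_{k=1}^{K}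 Y_k·( w_k·(|u_k|²·S_k(v) − 2·Re(u_k·z_{k,k}(v)) + 1) − log w_k ) + P(v). Then a point v* ∈ F minimizes the weighted objective v ↦ P(v) − ∑_{k=1}^{K} Y_k·R_k(v) over F if and only if there exist w* ∈ (0,∞)^K and u* ∈ ℂ^K such that (v*, w*, u*) minimizes W over F × (0,∞)^K × ℂ^K; moreover, for every v the partial infimum satisfies inf_{w,u} W(v, w, u) = P(v) − ∑_k Y_k·R_k(v) + ∑_k Y_k. (Paper's Proposition 1: the weighted-rate-minus-power problem and the WMMSE problem have the same optimal beamformer solutions.) -/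
open Finset

noncomputable section

namespace HCRANWMMSE

variable (m K : ℕ)

/-- Effective channel coefficient `z_{k,j}(v) = h_k^H v_j`. -/
def zc (h : Fin K → Fin m → ℂ) (v : Fin K → Fin m → ℂ) (k j : Fin K) : ℂ :=
  ∑ i, (starRingEnd ℂ) (h k i) * v j i

/-- Total received power plus interference-plus-noise `S_k(v)`. -/
def Sk (h : Fin K → Fin m → ℂ) (φ : Fin K → ℝ) (v : Fin K → Fin m → ℂ) (k : Fin K) : ℝ :=
  ∑ j, ‖zc m K h v k j‖ ^ 2 + φ k

/-- Signal-to-interference-plus-noise ratio of user `k`. -/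
def SINR (h : Fin K → Fin m → ℂ) (φ : Fin K → ℝ) (v : Fin K → Fin m → ℂ) (k : Fin K) : ℝ :=
  ‖zc m K h v k k‖ ^ 2 / (∑ j ∈ Finset.univ.erase k, ‖zc m K h v k j‖ ^ 2 + φ k)

/-- Achievable rate (in nats) of user `k`. -/
def Rk (h : Fin K → Fin m → ℂ) (φ : Fin K → ℝ) (v : Fin K → Fin m → ℂ) (k : Fin K) : ℝ :=
  Real.log (1 + SINR m K h φ v k)

/-- The WMMSE objective `W(v, w, u)`. -/
def W (h : Fin K → Fin m → ℂ) (φ : Fin K → ℝ) (Y : Fin K → ℝ)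
    (P : (Fin K → Fin m → ℂ) → ℝ)
    (v : Fin K → Fin m → ℂ) (w : Fin K → ℝ) (u : Fin K → ℂ) : ℝ :=
  ∑ k, Y k * (w k * (‖u k‖ ^ 2 * Sk m K h φ v k - 2 * (u k * zc m K h v k k).re + 1)
      - Real.log (w k)) + P v

/-- Interference-plus-noise denominator. -/
def Dk (h : Fin K → Fin m → ℂ) (φ : Fin K → ℝ) (v : Fin K → Fin m → ℂ) (k : Fin K) : ℝ :=
  ∑ j ∈ Finset.univ.erase k, ‖zc m K h v k j‖ ^ 2 + φ k

lemma Dk_pos (h : Fin K → Fin m → ℂ) (φ : Fin K → ℝ) (hφ : ∀ k, 0 < φ k)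
    (v : Fin K → Fin m → ℂ) (k : Fin K) : 0 < Dk m K h φ v k := by
  have : (0:ℝ) ≤ ∑ j ∈ Finset.univ.erase k, ‖zc m K h v k j‖ ^ 2 :=
    Finset.sum_nonneg fun j _ => by positivity
  have := hφ k
  unfold Dk; linarith

lemma Sk_eq (h : Fin K → Fin m → ℂ) (φ : Fin K → ℝ) (v : Fin K → Fin m → ℂ) (k : Fin K) :
    Sk m K h φ v k = ‖zc m K h v k k‖ ^ 2 + Dk m K h φ v k := by
  unfold Sk Dk
  rw [← Finset.add_sum_erase _ _ (Finset.mem_univ k)]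
  ring

lemma Sk_pos (h : Fin K → Fin m → ℂ) (φ : Fin K → ℝ) (hφ : ∀ k, 0 < φ k)
    (v : Fin K → Fin m → ℂ) (k : Fin K) : 0 < Sk m K h φ v k := by
  have h1 := Dk_pos m K h φ hφ v k
  have h2 : (0:ℝ) ≤ ‖zc m K h v k k‖ ^ 2 := by positivity
  rw [Sk_eq]; linarith

lemma Rk_eq (h : Fin K → Fin m → ℂ) (φ : Fin K → ℝ) (hφ : ∀ k, 0 < φ k)
    (v : Fin K → Fin m → ℂ) (k : Fin K) :
    Rk m K h φ v k = Real.log (Sk m K h φ v k) - Real.log (Dk m K h φ v k) := by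
  have hD := Dk_pos m K h φ hφ v k
  have hS := Sk_pos m K h φ hφ v k
  have h1 : 1 + SINR m K h φ v k = Sk m K h φ v k / Dk m K h φ v k := by
    unfold SINR
    rw [Sk_eq]
    show 1 + ‖zc m K h v k k‖ ^ 2 / Dk m K h φ v k = _
    field_simp
    ring
  unfold Rk
  rw [h1, Real.log_div (ne_of_gt hS) (ne_of_gt hD)]

/-- Lower bound on the MSE term. -/
lemma e_lb (h : Fin K → Fin m → ℂ) (φ : Fin K → ℝ) (hφ : ∀ k, 0 < φ k)
    (v : Fin K → Fin m → ℂ) (k : Fin K) (u : ℂ) :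
    Dk m K h φ v k / Sk m K h φ v k
      ≤ ‖u‖ ^ 2 * Sk m K h φ v k - 2 * (u * zc m K h v k k).re + 1 := by
  have hS := Sk_pos m K h φ hφ v k
  set S := Sk m K h φ v k with hSdef
  set z := zc m K h v k k with hzdef
  have hDS : Dk m K h φ v k = S - ‖z‖ ^ 2 := by rw [hSdef, Sk_eq]; ring
  rw [hDS, div_le_iff₀ hS]
  have hu : ‖u‖ ^ 2 = u.re ^ 2 + u.im ^ 2 := by
    rw [Complex.sq_norm, Complex.normSq_apply]; ring
  have hz : ‖z‖ ^ 2 = z.re ^ 2 + z.im ^ 2 := by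
    rw [Complex.sq_norm, Complex.normSq_apply]; ring
  have hre : (u * z).re = u.re * z.re - u.im * z.im := Complex.mul_re u z
  rw [hu, hz, hre]
  nlinarith [sq_nonneg (S * u.re - z.re), sq_nonneg (S * u.im + z.im), sq_nonneg S, hS]

lemma e_lb_pos (h : Fin K → Fin m → ℂ) (φ : Fin K → ℝ) (hφ : ∀ k, 0 < φ k)
    (v : Fin K → Fin m → ℂ) (k : Fin K) :
    0 < Dk m K h φ v k / Sk m K h φ v k :=
  div_pos (Dk_pos m K h φ hφ v k) (Sk_pos m K h φ hφ v k)

/-- Per-user lower bound on the weighted-MSE term. -/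
lemma term_lb (h : Fin K → Fin m → ℂ) (φ : Fin K → ℝ) (hφ : ∀ k, 0 < φ k)
    (v : Fin K → Fin m → ℂ) (k : Fin K) (w : ℝ) (hw : 0 < w) (u : ℂ) :
    1 - Rk m K h φ v k
      ≤ w * (‖u‖ ^ 2 * Sk m K h φ v k - 2 * (u * zc m K h v k k).re + 1)
        - Real.log w := by
  have hD := Dk_pos m K h φ hφ v k
  have hS := Sk_pos m K h φ hφ v k
  have hE := e_lb m K h φ hφ v k u
  have hEpos := e_lb_pos m K h φ hφ v k
  set E := Dk m K h φ v k / Sk m K h φ v k with hEdef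
  have h1 : w * E ≤ w * (‖u‖ ^ 2 * Sk m K h φ v k - 2 * (u * zc m K h v k k).re + 1) :=
    mul_le_mul_of_nonneg_left hE hw.le
  have h2 : Real.log (w * E) ≤ w * E - 1 :=
    Real.log_le_sub_one_of_pos (mul_pos hw hEpos)
  rw [Real.log_mul (ne_of_gt hw) (ne_of_gt hEpos)] at h2
  have h3 : Real.log E = Real.log (Dk m K h φ v k) - Real.log (Sk m K h φ v k) :=
    Real.log_div (ne_of_gt hD) (ne_of_gt hS)
  rw [Rk_eq m K h φ hφ v k]
  linarith

/-- Optimal MSE weights. -/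
def wopt (h : Fin K → Fin m → ℂ) (φ : Fin K → ℝ) (v : Fin K → Fin m → ℂ) (k : Fin K) : ℝ :=
  Sk m K h φ v k / Dk m K h φ v k

/-- Optimal receive filters. -/
def uopt (h : Fin K → Fin m → ℂ) (φ : Fin K → ℝ) (v : Fin K → Fin m → ℂ) (k : Fin K) : ℂ :=
  (starRingEnd ℂ) (zc m K h v k k) / (Sk m K h φ v k : ℂ)

lemma wopt_pos (h : Fin K → Fin m → ℂ) (φ : Fin K → ℝ) (hφ : ∀ k, 0 < φ k)
    (v : Fin K → Fin m → ℂ) (k : Fin K) : 0 < wopt m K h φ v k :=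
  div_pos (Sk_pos m K h φ hφ v k) (Dk_pos m K h φ hφ v k)

/-- At the optimal `(w,u)` the per-user term attains `1 - R_k`. -/
lemma term_eq (h : Fin K → Fin m → ℂ) (φ : Fin K → ℝ) (hφ : ∀ k, 0 < φ k)
    (v : Fin K → Fin m → ℂ) (k : Fin K) :
    wopt m K h φ v k *
        (‖uopt m K h φ v k‖ ^ 2 * Sk m K h φ v k
          - 2 * (uopt m K h φ v k * zc m K h v k k).re + 1)
      - Real.log (wopt m K h φ v k) = 1 - Rk m K h φ v k := by
  have hD := Dk_pos m K h φ hφ v k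
  have hS := Sk_pos m K h φ hφ v k
  have hDS : Dk m K h φ v k = Sk m K h φ v k - ‖zc m K h v k k‖ ^ 2 := by
    rw [Sk_eq]; ring
  have hnorm : ‖uopt m K h φ v k‖ ^ 2 = ‖zc m K h v k k‖ ^ 2 / Sk m K h φ v k ^ 2 := by
    unfold uopt
    rw [norm_div, div_pow, RCLike.norm_conj, Complex.norm_real,
      Real.norm_of_nonneg hS.le]
  have hre : (uopt m K h φ v k * zc m K h v k k).re
      = ‖zc m K h v k k‖ ^ 2 / Sk m K h φ v k := by
    unfold uopt
    rw [div_mul_eq_mul_div]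
    have hcz : (starRingEnd ℂ) (zc m K h v k k) * zc m K h v k k
        = ((‖zc m K h v k k‖ ^ 2 : ℝ) : ℂ) := by
      rw [mul_comm, Complex.mul_conj]
      norm_cast
      rw [← Complex.sq_norm]
    rw [hcz, Complex.div_ofReal_re, Complex.ofReal_re]
  have hE : ‖uopt m K h φ v k‖ ^ 2 * Sk m K h φ v k
      - 2 * (uopt m K h φ v k * zc m K h v k k).re + 1
      = Dk m K h φ v k / Sk m K h φ v k := by
    rw [hnorm, hre, hDS]
    field_simp
    ring
  rw [hE]
  unfold wopt
  have h1 : Sk m K h φ v k / Dk m K h φ v k * (Dk m K h φ v k / Sk m K h φ v k) = 1 := by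
    field_simp
  rw [h1, Real.log_div (ne_of_gt hS) (ne_of_gt hD), Rk_eq m K h φ hφ v k]

lemma W_ge (h : Fin K → Fin m → ℂ) (φ : Fin K → ℝ) (hφ : ∀ k, 0 < φ k)
    (Y : Fin K → ℝ) (hY : ∀ k, 0 < Y k) (P : (Fin K → Fin m → ℂ) → ℝ)
    (v : Fin K → Fin m → ℂ) (w : Fin K → ℝ) (hw : ∀ k, 0 < w k) (u : Fin K → ℂ) :
    P v - ∑ k, Y k * Rk m K h φ v k + ∑ k, Y k ≤ W m K h φ Y P v w u := by
  unfold W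
  have hsum : ∑ k, Y k * (1 - Rk m K h φ v k)
      ≤ ∑ k, Y k * (w k * (‖u k‖ ^ 2 * Sk m K h φ v k
          - 2 * (u k * zc m K h v k k).re + 1) - Real.log (w k)) := by
    apply Finset.sum_le_sum
    intro k _
    exact mul_le_mul_of_nonneg_left (term_lb m K h φ hφ v k (w k) (hw k) (u k)) (hY k).le
  have hid : ∑ k, Y k * (1 - Rk m K h φ v k)
      = ∑ k, Y k - ∑ k, Y k * Rk m K h φ v k := by
    rw [← Finset.sum_sub_distrib]
    apply Finset.sum_congr rfl
    intro k _; ring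
  rw [hid] at hsum
  linarith

lemma W_eq (h : Fin K → Fin m → ℂ) (φ : Fin K → ℝ) (hφ : ∀ k, 0 < φ k)
    (Y : Fin K → ℝ) (P : (Fin K → Fin m → ℂ) → ℝ) (v : Fin K → Fin m → ℂ) :
    W m K h φ Y P v (wopt m K h φ v) (uopt m K h φ v)
      = P v - ∑ k, Y k * Rk m K h φ v k + ∑ k, Y k := by
  unfold W
  have hid : ∑ k, Y k * (wopt m K h φ v k *
        (‖uopt m K h φ v k‖ ^ 2 * Sk m K h φ v k
          - 2 * (uopt m K h φ v k * zc m K h v k k).re + 1)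
      - Real.log (wopt m K h φ v k))
      = ∑ k, Y k - ∑ k, Y k * Rk m K h φ v k := by
    rw [← Finset.sum_sub_distrib]
    apply Finset.sum_congr rfl
    intro k _
    rw [term_eq m K h φ hφ v k]
    ring
  rw [hid]
  ring

/-- Paper's Proposition 1: `v*` minimizes the weighted power-minus-rate
objective over the feasible set `F` iff there exist MSE weights `w*` and
receive filters `u*` so that `(v*, w*, u*)` jointly minimizes the WMMSE
objective over `F × (0,∞)^K × ℂ^K`; moreover for every `v` the partial
infimum of `W(v, ·, ·)` equals `P(v) - ∑ Y_k R_k(v) + ∑ Y_k`. -/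
theorem wsr_wmmse_equivalence (h : Fin K → Fin m → ℂ) (φ : Fin K → ℝ)
    (hφ : ∀ k, 0 < φ k) (Y : Fin K → ℝ) (hY : ∀ k, 0 < Y k)
    (P : (Fin K → Fin m → ℂ) → ℝ) (F : Set (Fin K → Fin m → ℂ))
    (vstar : Fin K → Fin m → ℂ) :
    ((vstar ∈ F ∧ ∀ v ∈ F,
        P vstar - ∑ k, Y k * Rk m K h φ vstar k ≤ P v - ∑ k, Y k * Rk m K h φ v k)
      ↔ (∃ w : Fin K → ℝ, ∃ u : Fin K → ℂ, (∀ k, 0 < w k) ∧ vstar ∈ F ∧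
          ∀ v ∈ F, ∀ w' : Fin K → ℝ, (∀ k, 0 < w' k) → ∀ u' : Fin K → ℂ,
            W m K h φ Y P vstar w u ≤ W m K h φ Y P v w' u'))
    ∧ (∀ v : Fin K → Fin m → ℂ,
        IsGLB {x : ℝ | ∃ w : Fin K → ℝ, ∃ u : Fin K → ℂ,
            (∀ k, 0 < w k) ∧ x = W m K h φ Y P v w u}
          (P v - ∑ k, Y k * Rk m K h φ v k + ∑ k, Y k)) := by
  constructor
  · constructor
    · rintro ⟨hvF, hmin⟩
      refine ⟨wopt m K h φ vstar, uopt m K h φ vstar,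
        wopt_pos m K h φ hφ vstar, hvF, fun v hv w' hw' u' => ?_⟩
      have h1 := W_eq m K h φ hφ Y P vstar
      have h2 := W_ge m K h φ hφ Y hY P v w' hw' u'
      have h3 := hmin v hv
      linarith
    · rintro ⟨w, u, hw, hvF, hmin⟩
      refine ⟨hvF, fun v hv => ?_⟩
      have h1 := W_ge m K h φ hφ Y hY P vstar w hw u
      have h2 := hmin v hv (wopt m K h φ v) (wopt_pos m K h φ hφ v) (uopt m K h φ v)
      have h3 := W_eq m K h φ hφ Y P v
      linarith
  · intro v
    constructor
    · rintro x ⟨w, u, hw, rfl⟩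
      exact W_ge m K h φ hφ Y hY P v w hw u
    · intro b hb
      have : W m K h φ Y P v (wopt m K h φ v) (uopt m K h φ v)
          ∈ {x : ℝ | ∃ w : Fin K → ℝ, ∃ u : Fin K → ℂ,
              (∀ k, 0 < w k) ∧ x = W m K h φ Y P v w u} :=
        ⟨wopt m K h φ v, uopt m K h φ v, wopt_pos m K h φ hφ v, rfl⟩
      have := hb this
      rw [W_eq m K h φ hφ Y P v] at this
      exact this

end HCRANWMMSE
end
end
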